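/- For every natural number k ≥ 1, the central binomial coefficient C(2k,k) = (2k)!/(k!)^2 satisfies C(2k,k) ≤ 4^k/√(πk). -/

import Mathlib

open Real

theorem centralBinom_upper_bound (k : ℕ) (hk : 1 ≤ k) :
    (Nat.centralBinom k : ℝ) ≤ (4 : ℝ) ^ k / Real.sqrt (Real.pi * k) := by
  have hkR : (0:ℝ) < (k:ℝ) := by exact_mod_cast hk
  have htend : Filter.Tendsto (Stirling.stirlingSeq ∘ Nat.succ) Filter.atTop
      (nhds (Real.sqrt Real.pi)) :=
    Stirling.tendsto_stirlingSeq_sqrt_pi.comp (Filter.tendsto_add_atTop_nat 1)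
  have hlb : ∀ n : ℕ, 1 ≤ n → Real.sqrt Real.pi ≤ Stirling.stirlingSeq n := by
    intro n hn
    have := Stirling.stirlingSeq'_antitone.le_of_tendsto htend (n - 1)
    simpa [Function.comp, Nat.succ_eq_add_one, Nat.sub_add_cancel hn] using this
  have hmono : Stirling.stirlingSeq (2 * k) ≤ Stirling.stirlingSeq k := by
    have := Stirling.stirlingSeq'_antitone (show k - 1 ≤ 2 * k - 1 by omega)
    simpa [Function.comp, Nat.succ_eq_add_one, Nat.sub_add_cancel hk,
      Nat.sub_add_cancel (show 1 ≤ 2 * k by omega)] using this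
  set a := Stirling.stirlingSeq k with ha
  set b := Stirling.stirlingSeq (2 * k) with hb
  have hpi : (0:ℝ) < Real.sqrt Real.pi := Real.sqrt_pos.mpr Real.pi_pos
  have hapos : 0 < a := lt_of_lt_of_le hpi (hlb k hk)
  have hbpos : 0 < b := lt_of_lt_of_le hpi (hlb (2*k) (by omega))
  have key : b * Real.sqrt Real.pi ≤ a ^ 2 := by
    have h1 : b * Real.sqrt Real.pi ≤ a * Real.sqrt Real.pi :=
      mul_le_mul_of_nonneg_right hmono hpi.le
    have h2 : a * Real.sqrt Real.pi ≤ a * a :=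
      mul_le_mul_of_nonneg_left (hlb k hk) hapos.le
    nlinarith
  have hfk : ((k.factorial : ℝ)) = a * (Real.sqrt (2 * k) * ((k:ℝ) / Real.exp 1) ^ k) := by
    rw [ha, Stirling.stirlingSeq]
    field_simp
  have hf2k : (((2*k).factorial : ℝ)) =
      b * (Real.sqrt (2 * (2*k:ℕ)) * (((2*k:ℕ):ℝ) / Real.exp 1) ^ (2*k)) := by
    rw [hb, Stirling.stirlingSeq]
    have h0 : (0:ℝ) < Real.sqrt (2 * (2*k:ℕ)) := Real.sqrt_pos.mpr (by push_cast; linarith)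
    field_simp
  have hcb : (Nat.centralBinom k : ℝ) * ((k.factorial : ℝ))^2 = ((2*k).factorial : ℝ) := by
    rw [pow_two]
    have h := Nat.choose_mul_factorial_mul_factorial (show k ≤ 2*k by omega)
    rw [show 2*k - k = k by omega] at h
    rw [Nat.centralBinom]
    push_cast [← h]
    ring
  have h4 : Real.sqrt (2 * ((2*k:ℕ):ℝ)) = 2 * Real.sqrt k := by
    push_cast
    rw [show (2:ℝ) * (2 * k) = 2^2 * k by ring, Real.sqrt_mul (by positivity),
      Real.sqrt_sq (by norm_num)]
  have hpow : (((2*k:ℕ):ℝ) / Real.exp 1) ^ (2*k) = 4^k * (((k:ℝ) / Real.exp 1) ^ k)^2 := by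
    push_cast
    rw [show (2:ℝ) * k / Real.exp 1 = 2 * ((k:ℝ) / Real.exp 1) by ring, mul_pow,
      show 2*k = k*2 by ring, pow_mul, pow_mul]
    rw [← pow_mul, mul_comm k 2, pow_mul]
    norm_num
  have hsq2k : Real.sqrt (2 * (k:ℝ)) ^ 2 = 2 * k := Real.sq_sqrt (by positivity)
  have hsqk : Real.sqrt (k:ℝ) * Real.sqrt (k:ℝ) = (k:ℝ) := Real.mul_self_sqrt hkR.le
  rw [le_div_iff₀ (Real.sqrt_pos.mpr (by positivity)), Real.sqrt_mul Real.pi_pos.le]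
  have hfact2 : (0:ℝ) < ((k.factorial : ℝ))^2 := by positivity
  rw [← mul_le_mul_iff_of_pos_right hfact2]
  have lhs_eq : (Nat.centralBinom k : ℝ) * (Real.sqrt Real.pi * Real.sqrt k) * ((k.factorial : ℝ))^2
      = (b * Real.sqrt Real.pi) * (2 * (k:ℝ) * 4^k * (((k:ℝ) / Real.exp 1) ^ k)^2) := by
    rw [show (Nat.centralBinom k : ℝ) * (Real.sqrt Real.pi * Real.sqrt k) * ((k.factorial : ℝ))^2
        = ((Nat.centralBinom k : ℝ) * ((k.factorial : ℝ))^2) * (Real.sqrt Real.pi * Real.sqrt k) by ring,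
      hcb, hf2k, h4, hpow]
    rw [show b * (2 * Real.sqrt ↑k * (4 ^ k * (((k:ℝ) / Real.exp 1) ^ k) ^ 2)) *
        (Real.sqrt Real.pi * Real.sqrt ↑k)
        = (b * Real.sqrt Real.pi) * (2 * (Real.sqrt ↑k * Real.sqrt ↑k) * 4 ^ k *
          (((k:ℝ) / Real.exp 1) ^ k) ^ 2) by ring, hsqk]
  have rhs_eq : (4:ℝ)^k * ((k.factorial : ℝ))^2
      = a^2 * (2 * (k:ℝ) * 4^k * (((k:ℝ) / Real.exp 1) ^ k)^2) := by
    rw [hfk, mul_pow, mul_pow, hsq2k]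
    ring
  rw [lhs_eq, rhs_eq]
  exact mul_le_mul_of_nonneg_right key (by positivity)
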